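/- Let Y be a real p×T matrix and let K be a positive integer with K ≤ min(p, T). Let S = T⁻¹ Y Yᵀ and let λ̂₁ ≥ λ̂₂ ≥ … ≥ λ̂_p be its eigenvalues in nonincreasing order. Let v₁, …, v_K be orthonormal eigenvectors of Yᵀ Y associated with its K largest eigenvalues (in nonincreasing order), let F̂ be the T×K matrix whose columns are √T·v₁, …, √T·v_K, and set Λ̂ = T⁻¹ Y F̂. Then there exists an orthonormal family ξ̂₁, …, ξ̂_p of eigenvectors of S with S ξ̂_i = λ̂_i ξ̂_i for each i, such that Λ̂ Λ̂ᵀ = Σ_{i=1}^{K} λ̂_i ξ̂_i ξ̂_iᵀ and S − Λ̂ Λ̂ᵀ = Σ_{i=K+1}^{p} λ̂_i ξ̂_i ξ̂_iᵀ. -/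

import Mathlib

open Matrix BigOperators
open scoped RealInnerProductSpace

lemma pca_euclid_inner {n : ℕ} (x y : EuclideanSpace ℝ (Fin n)) :
    ⟪x, y⟫ = ∑ a, x a * y a := by
  simp [PiLp.inner_apply, RCLike.inner_apply, conj_trivial]
  exact Finset.sum_congr rfl fun _ _ => mul_comm _ _

/-- multiplicity of an eigenvalue equals dimension of eigenspace, for a symmetric map
with a full orthonormal eigenbasis -/
lemma pca_mult_eq {F : Type*} [NormedAddCommGroup F] [InnerProductSpace ℝ F]
    [FiniteDimensional ℝ F] {n : ℕ}
    (f : F →ₗ[ℝ] F) (hsym : ∀ x y : F, ⟪f x, y⟫ = ⟪x, f y⟫)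
    (lam : Fin n → ℝ) (B : OrthonormalBasis (Fin n) ℝ F)
    (hBe : ∀ i, f (B i) = lam i • B i) (c : ℝ) :
    Module.finrank ℝ (Module.End.eigenspace f c) =
      (Finset.univ.filter (fun i => lam i = c)).card := by
  classical
  set Ic := Finset.univ.filter (fun i => lam i = c) with hIc
  set W := Module.End.eigenspace f c with hW
  have hmemB : ∀ j : Ic, f (B j) = c • B j := by
    intro j
    have hj := (Finset.mem_filter.1 j.2).2
    rw [hBe, hj]
  let g : Ic → W := fun j => ⟨B j, Module.End.mem_eigenspace_iff.2 (hmemB j)⟩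
  have hgo : Orthonormal ℝ g := by
    rw [orthonormal_iff_ite]
    intro i j
    rw [Submodule.coe_inner]
    show ⟪B (i : Fin n), B (j : Fin n)⟫ = _
    rw [orthonormal_iff_ite.1 B.orthonormal]
    by_cases h : i = j
    · simp [h]
    · have h' : (i : Fin n) ≠ (j : Fin n) := fun e => h (Subtype.ext e)
      simp [h, h']
  have hspan : ⊤ ≤ Submodule.span ℝ (Set.range g) := by
    rintro ⟨x, hx⟩ -
    have hx' : f x = c • x := Module.End.mem_eigenspace_iff.1 hx
    have hcoef : ∀ i, i ∉ Ic → ⟪B i, x⟫ = 0 := by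
      intro i hi
      have hne : lam i ≠ c := by simpa [hIc] using hi
      have h1 : lam i * ⟪B i, x⟫ = c * ⟪B i, x⟫ := by
        calc lam i * ⟪B i, x⟫ = ⟪lam i • B i, x⟫ := (real_inner_smul_left _ _ _).symm
          _ = ⟪f (B i), x⟫ := by rw [hBe]
          _ = ⟪B i, f x⟫ := hsym _ _
          _ = ⟪B i, c • x⟫ := by rw [hx']
          _ = c * ⟪B i, x⟫ := real_inner_smul_right _ _ _
      by_contra hz
      exact hne (mul_right_cancel₀ hz h1)
    have hxsum : x = ∑ i ∈ Ic, ⟪B i, x⟫ • B i := by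
      have h0 : ∑ i ∈ Ic, ⟪B i, x⟫ • B i = ∑ i, ⟪B i, x⟫ • B i :=
        Finset.sum_subset (Finset.subset_univ Ic)
          (fun i _ hi => by rw [hcoef i hi, zero_smul])
      rw [h0]
      conv_lhs => rw [← B.sum_repr x]
      exact Finset.sum_congr rfl fun i _ => by rw [B.repr_apply_apply]
    have heq : (⟨x, hx⟩ : W) = ∑ j : Ic, ⟪B (j : Fin n), x⟫ • g j := by
      apply Subtype.ext
      push_cast [AddSubmonoidClass.coe_finset_sum, SetLike.val_smul]
      rw [Finset.sum_coe_sort Ic (fun i => ⟪B i, x⟫ • B i)]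
      exact hxsum
    rw [heq]
    exact Submodule.sum_mem _ fun j _ =>
      Submodule.smul_mem _ _ (Submodule.subset_span ⟨j, rfl⟩)
  let b : Module.Basis Ic ℝ W := Module.Basis.mk hgo.linearIndependent hspan
  rw [Module.finrank_eq_card_basis b, Fintype.card_coe]

/-- extension of a partial orthonormal eigen-family to a full orthonormal eigenbasis with
prescribed eigenvalue list -/
lemma pca_ext_basis {F : Type*} [NormedAddCommGroup F] [InnerProductSpace ℝ F]
    [FiniteDimensional ℝ F] {n : ℕ}
    (f : F →ₗ[ℝ] F) (hsym : ∀ x y : F, ⟪f x, y⟫ = ⟪x, f y⟫)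
    (lam : Fin n → ℝ) (B : OrthonormalBasis (Fin n) ℝ F)
    (hBe : ∀ i, f (B i) = lam i • B i)
    (s : Set (Fin n)) (u : Fin n → F)
    (huo : Orthonormal ℝ (s.restrict u)) (hue : ∀ i ∈ s, f (u i) = lam i • u i) :
    ∃ ξ : Fin n → F, Orthonormal ℝ ξ ∧ (∀ i, f (ξ i) = lam i • ξ i) ∧ ∀ i ∈ s, ξ i = u i := by
  classical
  -- index finsets
  let Ic : ℝ → Finset (Fin n) := fun c => Finset.univ.filter (fun i => lam i = c)
  let W : ℝ → Submodule ℝ F := fun c => Module.End.eigenspace f c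
  have hcard : ∀ c, Module.finrank ℝ (W c) = Fintype.card (Ic c) := by
    intro c
    rw [pca_mult_eq f hsym lam B hBe c, Fintype.card_coe]
  -- the partial family inside each eigenspace
  let uc : ∀ c : ℝ, (Ic c) → (W c) := fun c j =>
    if h : (j : Fin n) ∈ s then
      ⟨u j, Module.End.mem_eigenspace_iff.2 (by
        rw [hue _ h, (Finset.mem_filter.1 j.2).2])⟩
    else 0
  have H : ∀ c : ℝ, ∃ bc : OrthonormalBasis (Ic c) ℝ (W c),
      ∀ j : (Ic c), (j : Fin n) ∈ s → bc j = uc c j := by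
    intro c
    have huo' : Orthonormal ℝ (Set.restrict {j : (Ic c) | (j : Fin n) ∈ s} (uc c)) := by
      rw [orthonormal_iff_ite]
      rintro ⟨⟨i, hi⟩, hi'⟩ ⟨⟨j, hj⟩, hj'⟩
      have hi'' : (i : Fin n) ∈ s := hi'
      have hj'' : (j : Fin n) ∈ s := hj'
      simp only [Set.restrict, Set.domRestrict_apply]
      rw [Submodule.coe_inner]
      have : ∀ (k : Fin n) (hk : k ∈ Ic c) (hk' : k ∈ s),
          ((uc c ⟨k, hk⟩ : W c) : F) = u k := by
        intro k hk hk'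
        simp only [uc, dif_pos hk']
      rw [this i hi hi'', this j hj hj'']
      have := orthonormal_iff_ite.1 huo ⟨i, hi''⟩ ⟨j, hj''⟩
      simp only [Set.restrict, Set.domRestrict_apply] at this
      rw [this]
      by_cases h : i = j
      · subst h; simp
      · have h1 : (⟨i, hi''⟩ : s) ≠ ⟨j, hj''⟩ := fun e => h (congrArg Subtype.val e)
        have h2 : (⟨⟨i, hi⟩, hi'⟩ : {j : (Ic c) | (j : Fin n) ∈ s}) ≠ ⟨⟨j, hj⟩, hj'⟩ := by
          intro e
          exact h (congrArg (fun z => ((z : (Ic c)) : Fin n)) (congrArg Subtype.val e))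
        simp [h1, h2]
    exact huo'.exists_orthonormalBasis_extension_of_card_eq (hcard c)
  choose bc hbc using H
  -- the eigenbasis
  have hmem : ∀ i : Fin n, i ∈ Ic (lam i) := by
    intro i; simp [Ic]
  let ξ : Fin n → F := fun i => (bc (lam i) ⟨i, hmem i⟩ : F)
  have hxi : ∀ (i : Fin n) (c : ℝ) (h : lam i = c) (hm : i ∈ Ic c),
      ξ i = (bc c ⟨i, hm⟩ : F) := by
    intro i c h hm
    subst h
    rfl
  have heigen : ∀ i, f (ξ i) = lam i • ξ i := by
    intro i
    have := (bc (lam i) ⟨i, hmem i⟩).2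
    exact Module.End.mem_eigenspace_iff.1 this
  refine ⟨ξ, ?_, heigen, ?_⟩
  · rw [orthonormal_iff_ite]
    intro i j
    by_cases h : lam i = lam j
    · have hmi : i ∈ Ic (lam j) := by simp [Ic, h]
      rw [hxi i (lam j) h hmi, hxi j (lam j) rfl (hmem j)]
      rw [← Submodule.coe_inner, orthonormal_iff_ite.1 (bc (lam j)).orthonormal]
      by_cases hij : i = j
      · subst hij; simp
      · have : (⟨i, hmi⟩ : (Ic (lam j))) ≠ ⟨j, hmem j⟩ :=
          fun e => hij (congrArg Subtype.val e)
        simp [hij, this]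
    · have hij : i ≠ j := fun e => h (by rw [e])
      have h1 : lam i * ⟪ξ i, ξ j⟫ = lam j * ⟪ξ i, ξ j⟫ := by
        calc lam i * ⟪ξ i, ξ j⟫ = ⟪lam i • ξ i, ξ j⟫ := (real_inner_smul_left _ _ _).symm
          _ = ⟪f (ξ i), ξ j⟫ := by rw [heigen]
          _ = ⟪ξ i, f (ξ j)⟫ := hsym _ _
          _ = ⟪ξ i, lam j • ξ j⟫ := by rw [heigen]
          _ = lam j * ⟪ξ i, ξ j⟫ := real_inner_smul_right _ _ _
      have h2 : ⟪ξ i, ξ j⟫ = 0 := by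
        by_contra hz
        exact h (mul_right_cancel₀ hz h1)
      simp [hij, h2]
  · intro i hi
    have := hbc (lam i) ⟨i, hmem i⟩ hi
    have h2 : ξ i = ((uc (lam i) ⟨i, hmem i⟩ : W (lam i)) : F) := by
      show ((bc (lam i) ⟨i, hmem i⟩ : W (lam i)) : F) = _
      rw [this]
    rw [h2]
    simp only [uc, dif_pos hi]

set_option maxHeartbeats 2000000 in
theorem stmt2 (p T K : ℕ) (hp : 0 < p) (hT : 0 < T) (hK : 0 < K)
    (hKp : K ≤ p) (hKT : K ≤ T)
    (Y : Matrix (Fin p) (Fin T) ℝ)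
    (S : Matrix (Fin p) (Fin p) ℝ) (hSdef : S = (T : ℝ)⁻¹ • (Y * Yᵀ))
    (hS : S.IsHermitian)
    (lamhat : Fin p → ℝ)
    (hlam : ∃ σ : Equiv.Perm (Fin p), lamhat = hS.eigenvalues ∘ σ)
    (hanti : Antitone lamhat)
    (hYY : (Yᵀ * Y).IsHermitian)
    (mu : Fin T → ℝ)
    (hmu : ∃ σ : Equiv.Perm (Fin T), mu = hYY.eigenvalues ∘ σ)
    (hmuanti : Antitone mu)
    (v : Fin K → (Fin T → ℝ))
    (hortho : ∀ i j : Fin K, (∑ t, v i t * v j t) = if i = j then 1 else 0)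
    (heig : ∀ i : Fin K, (Yᵀ * Y) *ᵥ v i = mu (Fin.castLE hKT i) • v i)
    (Fhat : Matrix (Fin T) (Fin K) ℝ)
    (hF : Fhat = Matrix.of fun t i => Real.sqrt T * v i t)
    (Lam : Matrix (Fin p) (Fin K) ℝ) (hLam : Lam = (T : ℝ)⁻¹ • (Y * Fhat)) :
    ∃ ξ : Fin p → (Fin p → ℝ),
      (∀ i j : Fin p, (∑ a, ξ i a * ξ j a) = if i = j then 1 else 0) ∧
      (∀ i : Fin p, S *ᵥ ξ i = lamhat i • ξ i) ∧
      Lam * Lamᵀ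
        = ∑ i ∈ Finset.univ.filter (fun i : Fin p => (i : ℕ) < K),
            lamhat i • Matrix.vecMulVec (ξ i) (ξ i) ∧
      S - Lam * Lamᵀ
        = ∑ i ∈ Finset.univ.filter (fun i : Fin p => K ≤ (i : ℕ)),
            lamhat i • Matrix.vecMulVec (ξ i) (ξ i) := by
  classical
  obtain ⟨σp, hσp⟩ := hlam
  obtain ⟨σT, hσT⟩ := hmu
  have hT' : (0:ℝ) < T := by exact_mod_cast hT
  have hTne : (T:ℝ) ≠ 0 := ne_of_gt hT'
  -- symmetry of entries
  have hSsym : ∀ a b, S a b = S b a := by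
    intro a b
    conv_lhs => rw [← hS]
    simp [Matrix.conjTranspose_apply]
  have hYYsym : ∀ a b, (Yᵀ * Y) a b = (Yᵀ * Y) b a := by
    intro a b
    conv_lhs => rw [← hYY]
    simp [Matrix.conjTranspose_apply]
  -- the symmetric endomorphisms
  set f : EuclideanSpace ℝ (Fin p) →ₗ[ℝ] EuclideanSpace ℝ (Fin p) := Matrix.toEuclideanLin S with hf
  set g : EuclideanSpace ℝ (Fin T) →ₗ[ℝ] EuclideanSpace ℝ (Fin T) :=
    Matrix.toEuclideanLin (Yᵀ * Y) with hg
  have hfapp : ∀ x : EuclideanSpace ℝ (Fin p), f x = S *ᵥ x := fun _ => rfl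
  have hgapp : ∀ x : EuclideanSpace ℝ (Fin T), g x = (Yᵀ * Y) *ᵥ x := fun _ => rfl
  have hsymgen : ∀ (q : ℕ) (M : Matrix (Fin q) (Fin q) ℝ), (∀ a b, M a b = M b a) →
      ∀ x y : EuclideanSpace ℝ (Fin q), ⟪(Matrix.toEuclideanLin M) x, y⟫ = ⟪x, (Matrix.toEuclideanLin M) y⟫ := by
    intro q M hM x y
    rw [pca_euclid_inner, pca_euclid_inner]
    show ∑ a, (M *ᵥ x) a * y a = ∑ a, x a * (M *ᵥ y) a
    simp only [Matrix.mulVec, dotProduct, Finset.sum_mul, Finset.mul_sum]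
    rw [Finset.sum_comm]
    refine Finset.sum_congr rfl fun a _ => Finset.sum_congr rfl fun b _ => ?_
    rw [hM b a]; ring
  have hsymf : ∀ x y : EuclideanSpace ℝ (Fin p), ⟪f x, y⟫ = ⟪x, f y⟫ := hsymgen p S hSsym
  have hsymg : ∀ x y : EuclideanSpace ℝ (Fin T), ⟪g x, y⟫ = ⟪x, g y⟫ := hsymgen T (Yᵀ * Y) hYYsym
  -- orthonormal eigenbases matching lamhat and mu
  set C : OrthonormalBasis (Fin p) ℝ (EuclideanSpace ℝ (Fin p)) :=
    hS.eigenvectorBasis.reindex σp.symm with hC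
  have hCe : ∀ i, f (C i) = lamhat i • C i := by
    intro i
    have h2 : C i = hS.eigenvectorBasis (σp i) := by
      rw [hC, OrthonormalBasis.reindex_apply, Equiv.symm_symm]
    rw [hσp]
    apply WithLp.ofLp_injective 2
    show S *ᵥ (C i) = _
    funext a
    have := congrFun (hS.mulVec_eigenvectorBasis (σp i)) a
    rw [h2]
    exact this
  set D : OrthonormalBasis (Fin T) ℝ (EuclideanSpace ℝ (Fin T)) :=
    hYY.eigenvectorBasis.reindex σT.symm with hD
  have hDe : ∀ i, g (D i) = mu i • D i := by
    intro i
    have h2 : D i = hYY.eigenvectorBasis (σT i) := by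
      rw [hD, OrthonormalBasis.reindex_apply, Equiv.symm_symm]
    rw [hσT]
    apply WithLp.ofLp_injective 2
    show (Yᵀ * Y) *ᵥ (D i) = _
    funext a
    have := congrFun (hYY.mulVec_eigenvectorBasis (σT i)) a
    rw [h2]
    exact this
  -- nonnegativity of eigenvalues
  have hYHT : Yᴴ = Yᵀ := by ext a b; simp [Matrix.conjTranspose_apply]
  have hYYps : (Yᵀ * Y).PosSemidef := by
    rw [← hYHT]; exact Matrix.posSemidef_conjTranspose_mul_self Y
  have hYYTps : (Y * Yᵀ).PosSemidef := by
    rw [← hYHT]; exact Matrix.posSemidef_self_mul_conjTranspose Y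
  have hmupos : ∀ j, 0 ≤ mu j := by
    intro j
    rw [hσT]
    exact hYYps.eigenvalues_nonneg (σT j)
  have hSps : S.PosSemidef := by
    rw [hSdef]
    exact hYYTps.smul (by positivity)
  have hlampos : ∀ i, 0 ≤ lamhat i := by
    intro i
    rw [hσp]
    exact hSps.eigenvalues_nonneg (σp i)
  -- multiplicity identities
  have hmultS : ∀ c, Module.finrank ℝ (Module.End.eigenspace f c)
      = (Finset.univ.filter (fun i => lamhat i = c)).card :=
    fun c => pca_mult_eq f hsymf lamhat C hCe c
  have hmultT : ∀ c, Module.finrank ℝ (Module.End.eigenspace g c)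
      = (Finset.univ.filter (fun j => mu j = c)).card :=
    fun c => pca_mult_eq g hsymg mu D hDe c
  -- eigenspace transfer
  have htrans : ∀ c : ℝ, c ≠ 0 →
      (Finset.univ.filter (fun i : Fin p => lamhat i = c)).card
        = (Finset.univ.filter (fun j : Fin T => mu j = (T:ℝ) * c)).card := by
    intro c hc
    rw [← hmultS, ← hmultT]
    have hfmem : ∀ x : EuclideanSpace ℝ (Fin p), x ∈ Module.End.eigenspace f c ↔
        (Y * Yᵀ) *ᵥ x = ((T:ℝ) * c) • x := by
      intro x
      rw [Module.End.mem_eigenspace_iff]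
      constructor
      · intro h
        have h' : S *ᵥ x = c • x := congrArg WithLp.ofLp h
        rw [hSdef, Matrix.smul_mulVec] at h'
        have := congrArg (fun z => (T:ℝ) • z) h'
        simpa [smul_smul, mul_inv_cancel₀ hTne, mul_comm] using this
      · intro h
        apply WithLp.ofLp_injective 2
        show S *ᵥ x = c • x
        rw [hSdef, Matrix.smul_mulVec, h, smul_smul]
        rw [← mul_assoc, inv_mul_cancel₀ hTne, one_mul]
    have hgmem : ∀ y : EuclideanSpace ℝ (Fin T), y ∈ Module.End.eigenspace g ((T:ℝ)*c) ↔
        (Yᵀ * Y) *ᵥ y = ((T:ℝ) * c) • y := fun y => Module.End.mem_eigenspace_iff.trans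
          ⟨fun h => congrArg WithLp.ofLp h, fun h => by apply WithLp.ofLp_injective 2; exact h⟩
    have hTc : (T:ℝ) * c ≠ 0 := mul_ne_zero hTne hc
    apply le_antisymm
    · have hmap : ∀ x ∈ Module.End.eigenspace f c,
          (Matrix.toEuclideanLin Yᵀ) x ∈ Module.End.eigenspace g ((T:ℝ)*c) := by
        intro x hx
        rw [hgmem]
        show (Yᵀ * Y) *ᵥ (Yᵀ *ᵥ x) = ((T:ℝ)*c) • (Yᵀ *ᵥ x)
        rw [Matrix.mulVec_mulVec, Matrix.mul_assoc, ← Matrix.mulVec_mulVec,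
          (hfmem x).1 hx, Matrix.mulVec_smul]
      have hinj : Function.Injective ((Matrix.toEuclideanLin Yᵀ).restrict hmap) := by
        rw [← LinearMap.ker_eq_bot, LinearMap.ker_eq_bot']
        rintro ⟨x, hx⟩ hx0
        have h0 : Yᵀ *ᵥ x = 0 := congrArg (WithLp.ofLp ∘ Subtype.val) hx0
        have h1 : (Y * Yᵀ) *ᵥ x = 0 := by
          rw [← Matrix.mulVec_mulVec, h0, Matrix.mulVec_zero]
        rw [(hfmem x).1 hx] at h1
        have hx0' : x = 0 := by
          have := smul_eq_zero.1 h1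
          exact (WithLp.ofLp_eq_zero 2).1 (this.resolve_left hTc)
        exact Subtype.ext hx0'
      exact LinearMap.finrank_le_finrank_of_injective hinj
    · have hmap : ∀ y ∈ Module.End.eigenspace g ((T:ℝ)*c),
          (Matrix.toEuclideanLin Y) y ∈ Module.End.eigenspace f c := by
        intro y hy
        rw [hfmem]
        show (Y * Yᵀ) *ᵥ (Y *ᵥ y) = ((T:ℝ)*c) • (Y *ᵥ y)
        rw [Matrix.mulVec_mulVec, Matrix.mul_assoc, ← Matrix.mulVec_mulVec,
          (hgmem y).1 hy, Matrix.mulVec_smul]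
      have hinj : Function.Injective ((Matrix.toEuclideanLin Y).restrict hmap) := by
        rw [← LinearMap.ker_eq_bot, LinearMap.ker_eq_bot']
        rintro ⟨y, hy⟩ hy0
        have h0 : Y *ᵥ y = 0 := congrArg (WithLp.ofLp ∘ Subtype.val) hy0
        have h1 : (Yᵀ * Y) *ᵥ y = 0 := by
          rw [← Matrix.mulVec_mulVec, h0, Matrix.mulVec_zero]
        rw [(hgmem y).1 hy] at h1
        have hy0' : y = 0 := by
          have := smul_eq_zero.1 h1
          exact (WithLp.ofLp_eq_zero 2).1 (this.resolve_left hTc)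
        exact Subtype.ext hy0'
      exact LinearMap.finrank_le_finrank_of_injective hinj
  -- counting
  have hcount : ∀ t : ℝ, 0 < t →
      (Finset.univ.filter (fun i : Fin p => t < (T:ℝ) * lamhat i)).card
        = (Finset.univ.filter (fun j : Fin T => t < mu j)).card := by
    intro t ht
    have hTne : (T:ℝ) ≠ 0 := ne_of_gt hT'
    set Cs : Finset ℝ := (Finset.univ.image lamhat).filter (fun c => t < (T:ℝ)*c) with hCs
    set Ds : Finset ℝ := (Finset.univ.image mu).filter (fun d => t < d) with hDs
    have h1 : (Finset.univ.filter (fun i : Fin p => t < (T:ℝ) * lamhat i)).card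
        = ∑ c ∈ Cs, ((Finset.univ.filter (fun i : Fin p => t < (T:ℝ)*lamhat i)).filter
            (fun i => lamhat i = c)).card := by
      apply Finset.card_eq_sum_card_fiberwise (f := lamhat)
      intro x hx
      simp only [Finset.mem_coe, Finset.mem_filter, Finset.mem_univ, true_and] at hx
      simp only [Finset.mem_coe, hCs, Finset.mem_filter, Finset.mem_image, Finset.mem_univ, true_and]
      exact ⟨⟨x, rfl⟩, hx⟩
    have h1' : ∀ c ∈ Cs, ((Finset.univ.filter (fun i : Fin p => t < (T:ℝ)*lamhat i)).filter
        (fun i => lamhat i = c)).card = (Finset.univ.filter (fun i : Fin p => lamhat i = c)).card := by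
      intro c hc
      congr 1
      ext i
      simp only [Finset.mem_filter, Finset.mem_univ, true_and]
      constructor
      · tauto
      · intro h
        refine ⟨?_, h⟩
        rw [h]
        exact (Finset.mem_filter.1 hc).2
    have h2 : (Finset.univ.filter (fun j : Fin T => t < mu j)).card
        = ∑ d ∈ Ds, ((Finset.univ.filter (fun j : Fin T => t < mu j)).filter
            (fun j => mu j = d)).card := by
      apply Finset.card_eq_sum_card_fiberwise (f := mu)
      intro x hx
      simp only [Finset.mem_coe, Finset.mem_filter, Finset.mem_univ, true_and] at hx
      simp only [Finset.mem_coe, hDs, Finset.mem_filter, Finset.mem_image, Finset.mem_univ, true_and]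
      exact ⟨⟨x, rfl⟩, hx⟩
    have h2' : ∀ d ∈ Ds, ((Finset.univ.filter (fun j : Fin T => t < mu j)).filter
        (fun j => mu j = d)).card = (Finset.univ.filter (fun j : Fin T => mu j = d)).card := by
      intro d hd
      congr 1
      ext j
      simp only [Finset.mem_filter, Finset.mem_univ, true_and]
      constructor
      · tauto
      · intro h
        refine ⟨?_, h⟩
        rw [h]
        exact (Finset.mem_filter.1 hd).2
    rw [h1, h2, Finset.sum_congr rfl h1', Finset.sum_congr rfl h2']
    -- Ds is the image of Cs under multiplication by T
    have hCpos : ∀ c ∈ Cs, c ≠ 0 := by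
      intro c hc
      have := (Finset.mem_filter.1 hc).2
      intro h0
      rw [h0, mul_zero] at this
      linarith
    have himg : Ds = Cs.image (fun c => (T:ℝ) * c) := by
      ext d
      simp only [hDs, hCs, Finset.mem_filter, Finset.mem_image, Finset.mem_univ, true_and]
      constructor
      · rintro ⟨⟨j, hj⟩, htd⟩
        have hd0 : d / T ≠ 0 := div_ne_zero (by intro h0; rw [h0] at htd; linarith) hTne
        have hcard := htrans (d/T) hd0
        rw [mul_div_cancel₀ _ hTne] at hcard
        have hpos : (Finset.univ.filter (fun j : Fin T => mu j = d)).Nonempty :=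
          ⟨j, by simp [hj]⟩
        rw [← Finset.card_pos, ← hcard, Finset.card_pos] at hpos
        obtain ⟨i, hi⟩ := hpos
        exact ⟨d/T, ⟨⟨⟨i, (Finset.mem_filter.1 hi).2⟩,
          by rw [mul_div_cancel₀ _ hTne]; exact htd⟩, by rw [mul_div_cancel₀ _ hTne]⟩⟩
      · rintro ⟨c, ⟨⟨⟨i, hi⟩, htc⟩, rfl⟩⟩
        refine ⟨?_, htc⟩
        have hc0 : c ≠ 0 := by
          intro h0; rw [h0, mul_zero] at htc; linarith
        have hcard := htrans c hc0
        have hpos : 0 < (Finset.univ.filter (fun i : Fin p => lamhat i = c)).card := by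
          rw [Finset.card_pos]; exact ⟨i, by simp [hi]⟩
        rw [hcard, Finset.card_pos] at hpos
        obtain ⟨j, hj⟩ := hpos
        exact ⟨j, (Finset.mem_filter.1 hj).2⟩
    rw [himg, Finset.sum_image (by
      intro a _ b _ h
      exact mul_left_cancel₀ hTne h)]
    exact Finset.sum_congr rfl fun c hc => htrans c (hCpos c hc)
  -- the key identification of eigenvalues
  have hkey : ∀ i : Fin K, (T:ℝ) * lamhat (Fin.castLE hKp i) = mu (Fin.castLE hKT i) := by
    intro i
    set a := (T:ℝ) * lamhat (Fin.castLE hKp i) with ha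
    set b := mu (Fin.castLE hKT i) with hb
    have hTanti : Antitone (fun i : Fin p => (T:ℝ) * lamhat i) :=
      fun x y hxy => mul_le_mul_of_nonneg_left (hanti hxy) (le_of_lt hT')
    have ha0 : 0 ≤ a := mul_nonneg (le_of_lt hT') (hlampos _)
    have hb0 : 0 ≤ b := hmupos _
    by_contra hne
    -- general counting bounds
    have hlow : ∀ t : ℝ, t < a →
        (i:ℕ) + 1 ≤ (Finset.univ.filter (fun i' : Fin p => t < (T:ℝ) * lamhat i')).card := by
      intro t hta
      have hsub : Finset.Iic (Fin.castLE hKp i) ⊆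
          Finset.univ.filter (fun i' : Fin p => t < (T:ℝ) * lamhat i') := by
        intro x hx
        rw [Finset.mem_Iic] at hx
        simp only [Finset.mem_filter, Finset.mem_univ, true_and]
        exact lt_of_lt_of_le hta (hTanti hx)
      have := Finset.card_le_card hsub
      rwa [Fin.card_Iic, Fin.coe_castLE] at this
    have hhigh : ∀ t : ℝ, a < t →
        (Finset.univ.filter (fun i' : Fin p => t < (T:ℝ) * lamhat i')).card ≤ (i:ℕ) := by
      intro t hat
      have hsub : Finset.univ.filter (fun i' : Fin p => t < (T:ℝ) * lamhat i') ⊆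
          Finset.Iio (Fin.castLE hKp i) := by
        intro x hx
        simp only [Finset.mem_filter, Finset.mem_univ, true_and] at hx
        rw [Finset.mem_Iio]
        by_contra hge
        push_neg at hge
        exact absurd (lt_of_lt_of_le hx (hTanti hge)) (not_lt.2 (le_of_lt hat))
      have := Finset.card_le_card hsub
      rwa [Fin.card_Iio, Fin.coe_castLE] at this
    have hlow' : ∀ t : ℝ, t < b →
        (i:ℕ) + 1 ≤ (Finset.univ.filter (fun j : Fin T => t < mu j)).card := by
      intro t htb
      have hsub : Finset.Iic (Fin.castLE hKT i) ⊆
          Finset.univ.filter (fun j : Fin T => t < mu j) := by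
        intro x hx
        rw [Finset.mem_Iic] at hx
        simp only [Finset.mem_filter, Finset.mem_univ, true_and]
        exact lt_of_lt_of_le htb (hmuanti hx)
      have := Finset.card_le_card hsub
      rwa [Fin.card_Iic, Fin.coe_castLE] at this
    have hhigh' : ∀ t : ℝ, b < t →
        (Finset.univ.filter (fun j : Fin T => t < mu j)).card ≤ (i:ℕ) := by
      intro t hbt
      have hsub : Finset.univ.filter (fun j : Fin T => t < mu j) ⊆
          Finset.Iio (Fin.castLE hKT i) := by
        intro x hx
        simp only [Finset.mem_filter, Finset.mem_univ, true_and] at hx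
        rw [Finset.mem_Iio]
        by_contra hge
        push_neg at hge
        exact absurd (lt_of_lt_of_le hx (hmuanti hge)) (not_lt.2 (le_of_lt hbt))
      have := Finset.card_le_card hsub
      rwa [Fin.card_Iio, Fin.coe_castLE] at this
    rcases lt_or_gt_of_ne hne with h | h
    · -- a < b
      have ht0 : 0 < (a+b)/2 := by linarith
      have h1 := hlow' ((a+b)/2) (by linarith)
      have h2 := hhigh ((a+b)/2) (by linarith)
      have := hcount ((a+b)/2) ht0
      omega
    · have ht0 : 0 < (a+b)/2 := by linarith
      have h1 := hlow ((a+b)/2) (by linarith)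
      have h2 := hhigh' ((a+b)/2) (by linarith)
      have := hcount ((a+b)/2) ht0
      omega
  -- the candidate eigenvectors coming from the factor structure
  set m : Fin p → ℝ := fun i => if h : (i:ℕ) < K then mu (Fin.castLE hKT ⟨i.1, h⟩) else 0 with hm
  set vv : Fin p → (Fin T → ℝ) := fun i => if h : (i:ℕ) < K then v ⟨i.1, h⟩ else 0 with hvv
  set w : Fin p → (Fin p → ℝ) := fun i => Y *ᵥ vv i with hw
  have hmK : ∀ (i : Fin p) (h : (i:ℕ) < K), m i = mu (Fin.castLE hKT ⟨i.1, h⟩) := by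
    intro i h; simp only [hm, dif_pos h]
  have hvvK : ∀ (i : Fin p) (h : (i:ℕ) < K), vv i = v ⟨i.1, h⟩ := by
    intro i h; simp only [hvv, dif_pos h]
  have heig' : ∀ (i : Fin p) (h : (i:ℕ) < K), (Yᵀ * Y) *ᵥ vv i = m i • vv i := by
    intro i h
    rw [hvvK i h, hmK i h]
    exact heig ⟨i.1, h⟩
  have hvvd : ∀ i j : Fin p, (i:ℕ) < K → (j:ℕ) < K →
      vv i ⬝ᵥ vv j = if i = j then 1 else 0 := by
    intro i j hi hj
    rw [hvvK i hi, hvvK j hj]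
    have h0 := hortho ⟨i.1, hi⟩ ⟨j.1, hj⟩
    rw [dotProduct, h0]
    congr 1
    simp [Fin.ext_iff]
  have hwd : ∀ i j : Fin p, (i:ℕ) < K → (j:ℕ) < K →
      w i ⬝ᵥ w j = if i = j then m i else 0 := by
    intro i j hi hj
    rw [hw]
    show (Y *ᵥ vv i) ⬝ᵥ (Y *ᵥ vv j) = _
    rw [Matrix.dotProduct_mulVec, ← Matrix.mulVec_transpose, Matrix.mulVec_mulVec,
      heig' i hi, smul_dotProduct, hvvd i j hi hj]
    simp [smul_eq_mul, mul_ite]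
  have hm0 : ∀ (i : Fin p), ¬((i:ℕ) < K) → m i = 0 := by
    intro i h; simp only [hm, dif_neg h]
  have hmnn : ∀ i, 0 ≤ m i := by
    intro i
    by_cases h : (i:ℕ) < K
    · rw [hmK i h]; exact hmupos _
    · rw [hm0 i h]
  have hlamm : ∀ (i : Fin p) (h : (i:ℕ) < K), (T:ℝ) * lamhat i = m i := by
    intro i h
    have hk := hkey ⟨i.1, h⟩
    have hci : Fin.castLE hKp ⟨i.1, h⟩ = i := Fin.ext rfl
    rw [hci] at hk
    rw [hk, hmK i h]
  have hSw : ∀ (i : Fin p), (i:ℕ) < K → S *ᵥ w i = lamhat i • w i := by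
    intro i h
    rw [hw]
    show S *ᵥ (Y *ᵥ vv i) = lamhat i • (Y *ᵥ vv i)
    rw [hSdef, Matrix.smul_mulVec, Matrix.mulVec_mulVec, Matrix.mul_assoc,
      ← Matrix.mulVec_mulVec, heig' i h, Matrix.mulVec_smul, smul_smul,
      ← hlamm i h, inv_mul_cancel_left₀ hTne]
  -- the partial orthonormal family
  set sset : Set (Fin p) := {i | m i ≠ 0} with hsset
  set u : Fin p → EuclideanSpace ℝ (Fin p) := fun i => WithLp.toLp 2 ((Real.sqrt (m i))⁻¹ • w i) with hu
  have hsK : ∀ i ∈ sset, (i:ℕ) < K := by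
    intro i hi
    by_contra h
    exact hi (hm0 i h)
  have hmpos : ∀ i ∈ sset, 0 < m i := fun i hi => lt_of_le_of_ne (hmnn i) (Ne.symm hi)
  have huapp : ∀ (i : Fin p) (a : Fin p), u i a = (Real.sqrt (m i))⁻¹ * w i a := by
    intro i a; rfl
  have huorth : Orthonormal ℝ (sset.restrict u) := by
    rw [orthonormal_iff_ite]
    rintro ⟨i, hi⟩ ⟨j, hj⟩
    simp only [Set.restrict, Set.domRestrict_apply]
    rw [pca_euclid_inner]
    have hsum : ∑ a, u i a * u j a
        = (Real.sqrt (m i))⁻¹ * ((Real.sqrt (m j))⁻¹ * (w i ⬝ᵥ w j)) := by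
      rw [dotProduct, Finset.mul_sum, Finset.mul_sum]
      refine Finset.sum_congr rfl fun a _ => ?_
      rw [huapp, huapp]
      ring
    rw [hsum, hwd i j (hsK i hi) (hsK j hj)]
    by_cases h : i = j
    · subst h
      rw [if_pos rfl, if_pos rfl]
      have hs0 : Real.sqrt (m i) ≠ 0 := by
        rw [Real.sqrt_ne_zero']
        exact hmpos i hi
      field_simp
      rw [Real.sq_sqrt (hmnn i)]
    · have h2 : (⟨i, hi⟩ : sset) ≠ ⟨j, hj⟩ := fun e => h (congrArg Subtype.val e)
      rw [if_neg h, if_neg h2]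
      ring
  have hueig : ∀ i ∈ sset, f (u i) = lamhat i • u i := by
    intro i hi
    apply WithLp.ofLp_injective 2
    show S *ᵥ ((Real.sqrt (m i))⁻¹ • w i) = lamhat i • ((Real.sqrt (m i))⁻¹ • w i)
    rw [Matrix.mulVec_smul, hSw i (hsK i hi), smul_comm]
  -- extend to a full orthonormal eigenbasis
  obtain ⟨ξE, hξo, hξe, hξu⟩ := pca_ext_basis f hsymf lamhat C hCe sset u huorth hueig
  have hvvc : ∀ j : Fin K, vv (Fin.castLE hKp j) = v j := by
    intro j
    rw [hvvK _ (show ((Fin.castLE hKp j : Fin p) : ℕ) < K from j.2)]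
    congr 1
  have hLam' : ∀ (a : Fin p) (j : Fin K),
      Lam a j = (T:ℝ)⁻¹ * Real.sqrt T * (w (Fin.castLE hKp j) a) := by
    intro a j
    rw [hLam, hF, Matrix.smul_apply, Matrix.mul_apply]
    have : w (Fin.castLE hKp j) a = ∑ t, Y a t * v j t := by
      rw [hw]
      show (Y *ᵥ vv (Fin.castLE hKp j)) a = _
      rw [hvvc j]
      rfl
    rw [this, smul_eq_mul, Finset.mul_sum, Finset.mul_sum]
    refine Finset.sum_congr rfl fun t _ => ?_
    simp only [Matrix.of_apply]
    ring
  -- the first-K sum identity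
  have hfilt : Finset.univ.filter (fun i : Fin p => (i:ℕ) < K)
      = Finset.univ.map (Fin.castLEEmb hKp) := by
    ext i
    simp only [Finset.mem_filter, Finset.mem_univ, true_and, Finset.mem_map,
      Fin.coe_castLEEmb]
    constructor
    · intro h
      exact ⟨⟨i.1, h⟩, Fin.ext rfl⟩
    · rintro ⟨j, rfl⟩
      exact j.2
  have hgoal3 : Lam * Lamᵀ
      = ∑ i ∈ Finset.univ.filter (fun i : Fin p => (i : ℕ) < K),
          lamhat i • Matrix.vecMulVec (ξE i) (ξE i) := by
    rw [hfilt, Finset.sum_map]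
    ext a b
    rw [Matrix.mul_apply, Matrix.sum_apply]
    refine Finset.sum_congr rfl fun j _ => ?_
    simp only [Fin.coe_castLEEmb]
    set i := Fin.castLE hKp j with hidef
    have hiK : (i : ℕ) < K := j.2
    rw [Matrix.transpose_apply, hLam' a j, hLam' b j, Matrix.smul_apply,
      Matrix.vecMulVec_apply, smul_eq_mul]
    have hsT : Real.sqrt T * Real.sqrt T = (T:ℝ) := Real.mul_self_sqrt (le_of_lt hT')
    by_cases hmz : m i = 0
    · have hw0 : w i = 0 := by
        have := hwd i i hiK hiK
        rw [if_pos rfl, hmz] at this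
        exact dotProduct_self_eq_zero.1 this
      have hl0 : lamhat i = 0 := by
        have := hlamm i hiK
        rw [hmz] at this
        exact (mul_eq_zero.1 this).resolve_left hTne
      rw [hw0, hl0]
      simp
    · have hisset : i ∈ sset := hmz
      have hxu : ξE i = u i := hξu i hisset
      have hm' : 0 < m i := hmpos i hisset
      have hsm : Real.sqrt (m i) * Real.sqrt (m i) = m i := Real.mul_self_sqrt (hmnn i)
      have hsm0 : Real.sqrt (m i) ≠ 0 := by
        rw [Real.sqrt_ne_zero']; exact hm'
      have hxa : ∀ c : Fin p, ξE i c = (Real.sqrt (m i))⁻¹ * w i c := by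
        intro c
        rw [hxu]
        exact huapp i c
      rw [hxa a, hxa b]
      have hli : lamhat i = m i / T := by
        rw [eq_div_iff hTne, mul_comm]
        exact hlamm i hiK
      rw [hli]
      have hinv : ((Real.sqrt (m i))⁻¹) * ((Real.sqrt (m i))⁻¹) = (m i)⁻¹ := by
        rw [← mul_inv, hsm]
      have hTinv : Real.sqrt T * Real.sqrt T * ((T:ℝ)⁻¹ * (T:ℝ)⁻¹) = (T:ℝ)⁻¹ := by
        rw [hsT]
        field_simp
      calc (T:ℝ)⁻¹ * Real.sqrt T * w i a * ((T:ℝ)⁻¹ * Real.sqrt T * w i b)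
          = (Real.sqrt T * Real.sqrt T * ((T:ℝ)⁻¹ * (T:ℝ)⁻¹)) * (w i a * w i b) := by ring
        _ = (T:ℝ)⁻¹ * (w i a * w i b) := by rw [hTinv]
        _ = (m i / T) * ((m i)⁻¹ * (w i a * w i b)) := by
              rw [div_mul_eq_mul_div,
                show m i * ((m i)⁻¹ * (w i a * w i b)) = m i * (m i)⁻¹ * (w i a * w i b) from by
                  ring,
                mul_inv_cancel₀ hmz, one_mul, inv_mul_eq_div]
        _ = m i / ↑T * ((Real.sqrt (m i))⁻¹ * w i a * ((Real.sqrt (m i))⁻¹ * w i b)) := by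
              rw [← hinv]; ring
  refine ⟨fun i => ξE i, ?_, ?_, hgoal3, ?_⟩
  · intro i j
    have := orthonormal_iff_ite.1 hξo i j
    rw [pca_euclid_inner] at this
    exact this
  · intro i
    exact congrArg WithLp.ofLp (hξe i)
  · -- spectral decomposition of S
    set U : Matrix (Fin p) (Fin p) ℝ := Matrix.of (fun i a => ξE i a) with hU
    have hUU : U * Uᵀ = 1 := by
      ext i j
      rw [Matrix.mul_apply, Matrix.one_apply]
      have := orthonormal_iff_ite.1 hξo i j
      rw [pca_euclid_inner] at this
      simp only [hU, Matrix.transpose_apply, Matrix.of_apply]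
      rw [this]
    have hUU' : Uᵀ * U = 1 := mul_eq_one_comm.1 hUU
    have hSU : S * Uᵀ = Uᵀ * Matrix.diagonal lamhat := by
      ext a i
      have h1 : (S *ᵥ ξE i) a = lamhat i * ξE i a := congrFun (congrArg WithLp.ofLp (hξe i)) a
      have h2 : (S * Uᵀ) a i = (S *ᵥ ξE i) a := by
        rw [Matrix.mul_apply, Matrix.mulVec, dotProduct]
        refine Finset.sum_congr rfl fun b _ => ?_
        simp only [hU, Matrix.transpose_apply, Matrix.of_apply]
      have h3 : (Uᵀ * Matrix.diagonal lamhat) a i = ξE i a * lamhat i := by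
        rw [Matrix.mul_diagonal, Matrix.transpose_apply]
        simp only [hU, Matrix.of_apply]
      rw [h2, h3, h1, mul_comm]
    have hspec : S = ∑ i, lamhat i • Matrix.vecMulVec (ξE i) (ξE i) := by
      have h2 : S = Uᵀ * Matrix.diagonal lamhat * U := by
        calc S = S * (Uᵀ * U) := by rw [hUU', Matrix.mul_one]
          _ = (S * Uᵀ) * U := by rw [Matrix.mul_assoc]
          _ = _ := by rw [hSU]
      rw [h2]
      ext a b
      rw [Matrix.mul_apply, Matrix.sum_apply]
      refine Finset.sum_congr rfl fun i _ => ?_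
      rw [Matrix.mul_diagonal, Matrix.smul_apply, Matrix.vecMulVec_apply,
        Matrix.transpose_apply]
      simp only [hU, Matrix.of_apply, smul_eq_mul]
      ring
    have hfilt2 : Finset.univ.filter (fun i : Fin p => ¬((i:ℕ) < K))
        = Finset.univ.filter (fun i : Fin p => K ≤ (i:ℕ)) := by
      ext i
      simp [not_lt]
    have hsplit := Finset.sum_filter_add_sum_filter_not Finset.univ
      (fun i : Fin p => (i:ℕ) < K) (fun i => lamhat i • Matrix.vecMulVec (ξE i) (ξE i))
    rw [hfilt2] at hsplit
    rw [hspec, ← hsplit, hgoal3]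
    exact add_sub_cancel_left _ _
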